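/- Let n,m be positive integers, Q > 0, w ≥ 1. Let 0 < h₁ < ⋯ < hₙ and 0 < g₁ < ⋯ < g_m, let p ∈ ℝⁿ and q ∈ ℝᵐ be probability vectors with positive entries, and set aᵢ = Q + 1/hᵢ², bⱼ = Q + 1/gⱼ². Assume Σᵢ pᵢ/aᵢ > w Σⱼ qⱼ/bⱼ. Suppose A is an n×m matrix with nonnegative entries such that (i) each column of A sums to 1, (ii) Σᵢ Aᵢⱼ aᵢ = bⱼ for every j, and (iii) for every k ∈ {1,…,n}, Σ_{i=k}^n pᵢ/aᵢ ≥ w Σⱼ (qⱼ/bⱼ)(Σ_{i=k}^n Aᵢⱼ). Then for every f ∈ ℝⁿ satisfying fₙ ≥ ½log₂(2πe/hₙ²), f₁ ≤ ½log₂(2πe(Q + 1/h₁²)), and 2^{2fᵢ} − 2πe/hᵢ² ≥ 2^{2f_k} − 2πe/h_k² whenever i < k, one has Σᵢ pᵢ fᵢ − (w/2) Σⱼ qⱼ log₂(Σᵢ Aᵢⱼ 2^{2fᵢ}) ≤ ½ Σᵢ pᵢ log₂(2πe aᵢ) − (w/2) Σⱼ qⱼ log₂(2πe bⱼ); i.e.,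 the point fᵢ* = ½log₂(2πe aᵢ) is optimal for this constrained maximization. -/

import Mathlib

open Finset

lemma aux_jensen_log {N : ℕ} (lam x : Fin N → ℝ) (h0 : ∀ i, 0 ≤ lam i)
    (h1 : ∑ i, lam i = 1) (hx : ∀ i, 0 < x i) :
    ∑ i, lam i * Real.log (x i) ≤ Real.log (∑ i, lam i * x i) := by
  have := (strictConcaveOn_log_Ioi.concaveOn).le_map_sum
    (t := Finset.univ) (w := lam) (p := x) (fun i _ => h0 i) h1 (fun i _ => hx i)
  simpa [smul_eq_mul] using this

lemma aux_vmono {a a' w w' : ℝ} (ha' : 0 < a') (haa : a' ≤ a) (hww : w' ≤ w)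
    (h1 : 0 < a' + w') :
    a' * Real.log ((a' + w') / a') ≤ a * Real.log ((a + w) / a) := by
  have ha : 0 < a := lt_of_lt_of_le ha' haa
  have h2 : 0 < a' + w := by linarith
  have h3 : 0 < a + w := by linarith
  have step1 : a' * Real.log ((a' + w') / a') ≤ a' * Real.log ((a' + w) / a') := by
    apply mul_le_mul_of_nonneg_left _ ha'.le
    exact Real.log_le_log (by positivity) ((div_le_div_iff_of_pos_right ha').mpr (by linarith))
  have hs : (-1 : ℝ) ≤ w / a := by
    have : 0 < 1 + w / a := by
      have : (a + w) / a = 1 + w / a := by field_simp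
      rw [← this]; positivity
    linarith
  have hp : 1 ≤ a / a' := (one_le_div ha').mpr haa
  have hB := one_add_mul_self_le_rpow_one_add hs hp
  have key : (a' + w) / a' ≤ ((a + w) / a) ^ (a / a') := by
    have h4 : (a' + w) / a' = 1 + a / a' * (w / a) := by field_simp
    have h5 : (a + w) / a = 1 + w / a := by field_simp
    rw [h4, h5]; exact hB
  have hlog := Real.log_le_log (by positivity) key
  rw [Real.log_rpow (by positivity)] at hlog
  have step2 : a' * Real.log ((a' + w) / a') ≤ a * Real.log ((a + w) / a) := by
    calc a' * Real.log ((a' + w) / a') ≤ a' * (a / a' * Real.log ((a + w) / a)) :=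
          mul_le_mul_of_nonneg_left hlog ha'.le
      _ = a * Real.log ((a + w) / a) := by field_simp
  linarith

lemma aux_abel_nat (v : ℕ → ℝ) (hv : ∀ k, v (k + 1) ≤ v k) (hv0 : v 0 ≤ 0) :
    ∀ (N : ℕ) (e : ℕ → ℝ), (∀ k, k ≤ N → 0 ≤ ∑ i ∈ Finset.Icc k N, e i) →
      ∑ i ∈ Finset.range (N + 1), e i * v i ≤ 0 := by
  intro N
  induction N with
  | zero =>
    intro e hσ
    have h0 := hσ 0 le_rfl
    simp only [Finset.Icc_self, Finset.sum_singleton] at h0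
    simpa using mul_nonpos_of_nonneg_of_nonpos h0 hv0
  | succ N ih =>
    intro e hσ
    set e' : ℕ → ℝ := fun i => if i = N then e N + e (N + 1) else e i with he'
    have he'sum : ∀ k, k ≤ N → ∑ i ∈ Finset.Icc k N, e' i = ∑ i ∈ Finset.Icc k (N + 1), e i := by
      intro k hk
      rw [Finset.sum_Icc_succ_top (by omega : k ≤ N + 1)]
      have hsplit : ∀ i, e' i = e i + (if i = N then e (N + 1) else 0) := by
        intro i; by_cases hi : i = N <;> simp [he', hi]
      simp_rw [hsplit]
      rw [Finset.sum_add_distrib, Finset.sum_ite_eq' (Finset.Icc k N) N]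
      simp [Finset.mem_Icc, hk]
    have h1 : ∑ i ∈ Finset.range (N + 2), e i * v i
        = ∑ i ∈ Finset.range (N + 1), e' i * v i + e (N + 1) * (v (N + 1) - v N) := by
      rw [Finset.sum_range_succ, Finset.sum_range_succ, Finset.sum_range_succ (n := N)]
      have hre : ∑ i ∈ Finset.range N, e' i * v i = ∑ i ∈ Finset.range N, e i * v i :=
        Finset.sum_congr rfl fun i hi => by
          have : i ≠ N := Nat.ne_of_lt (Finset.mem_range.mp hi)
          simp [he', this]
      rw [hre]; simp [he']; ring
    rw [h1]
    have t1 := ih e' (fun k hk => (he'sum k hk) ▸ hσ k (by omega))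
    have hE : 0 ≤ e (N + 1) := by
      have := hσ (N + 1) le_rfl
      simpa using this
    have t2 : e (N + 1) * (v (N + 1) - v N) ≤ 0 :=
      mul_nonpos_of_nonneg_of_nonpos hE (by linarith [hv N])
    linarith

lemma aux_abel_fin (n : ℕ) (E V : Fin (n + 1) → ℝ)
    (hσ : ∀ k : Fin (n + 1), 0 ≤ ∑ i ∈ Finset.Ici k, E i)
    (hV : ∀ i k : Fin (n + 1), i ≤ k → V k ≤ V i)
    (hV0 : V 0 ≤ 0) : ∑ i, E i * V i ≤ 0 := by
  set eN : ℕ → ℝ := fun i => if h : i < n + 1 then E ⟨i, h⟩ else 0 with heN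
  set vN : ℕ → ℝ := fun i => V ⟨min i n, by omega⟩ with hvN
  have hv : ∀ k, vN (k + 1) ≤ vN k := by
    intro k
    apply hV
    exact Fin.mk_le_mk.mpr (by omega)
  have hv0 : vN 0 ≤ 0 := by simpa [hvN] using hV0
  have hσN : ∀ k, k ≤ n → 0 ≤ ∑ i ∈ Finset.Icc k n, eN i := by
    intro k hk
    have hIci : Finset.Ici (⟨k, by omega⟩ : Fin (n + 1)) = Finset.Icc ⟨k, by omega⟩ (Fin.last n) := by
      ext x; simp [Fin.le_last]
    have hmap := Fin.map_valEmbedding_Icc (⟨k, by omega⟩ : Fin (n + 1)) (Fin.last n)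
    simp only [Fin.val_mk, Fin.val_last] at hmap
    have : ∑ i ∈ Finset.Icc k n, eN i = ∑ i ∈ Finset.Ici (⟨k, by omega⟩ : Fin (n + 1)), E i := by
      rw [hIci, ← hmap, Finset.sum_map]
      refine Finset.sum_congr rfl fun i _ => ?_
      simp [heN, i.isLt, Nat.lt_succ_iff.mp i.isLt]
    rw [this]; exact hσ _
  have hconv : ∑ i, E i * V i = ∑ i ∈ Finset.range (n + 1), eN i * vN i := by
    rw [← Fin.sum_univ_eq_sum_range (fun i => eN i * vN i) (n + 1)]
    refine Finset.sum_congr rfl fun i _ => ?_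
    have h1 : eN i.val = E i := by simp [heN, i.isLt, Nat.lt_succ_iff.mp i.isLt]
    have h2 : vN i.val = V i := by
      have : (⟨min i.val n, by omega⟩ : Fin (n + 1)) = i := by
        ext; simp [Nat.min_eq_left (Nat.lt_succ_iff.mp i.isLt)]
      simp [hvN, this]
    rw [h1, h2]
  rw [hconv]
  exact aux_abel_nat vN hv hv0 n eN hσN

/-- Optimization core of Case 2 of Theorem 1 (the case `r(w,Q) > 0`): with
`aᵢ = Q + 1/hᵢ²`, `bⱼ = Q + 1/gⱼ²`, `∑ pᵢ/aᵢ > w ∑ qⱼ/bⱼ`, and a nonnegative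
matrix `A` whose columns sum to `1`, mix the `aᵢ` into the `bⱼ`, and satisfy the
(suffix-sum) majorization requirement, the point `fᵢ* = ½ log₂(2πe aᵢ)` is
optimal for the constrained maximization problem (opt2). Logs are base 2. -/
theorem stmt1 (n m : ℕ) (Q w : ℝ) (hQ : 0 < Q) (hw : 1 ≤ w)
    (h : Fin (n + 1) → ℝ) (g : Fin (m + 1) → ℝ)
    (hh0 : ∀ i, 0 < h i) (hhmono : StrictMono h)
    (hg0 : ∀ j, 0 < g j) (hgmono : StrictMono g)
    (p : Fin (n + 1) → ℝ) (q : Fin (m + 1) → ℝ)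
    (hp : ∀ i, 0 < p i) (hpsum : ∑ i, p i = 1)
    (hq : ∀ j, 0 < q j) (hqsum : ∑ j, q j = 1)
    (a : Fin (n + 1) → ℝ) (b : Fin (m + 1) → ℝ)
    (ha : ∀ i, a i = Q + 1 / (h i) ^ 2)
    (hb : ∀ j, b j = Q + 1 / (g j) ^ 2)
    (hbal : ∑ i, p i / a i > w * ∑ j, q j / b j)
    (A : Matrix (Fin (n + 1)) (Fin (m + 1)) ℝ)
    (hA0 : ∀ i j, 0 ≤ A i j)
    (hAcol : ∀ j, ∑ i, A i j = 1)
    (hAa : ∀ j, ∑ i, A i j * a i = b j)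
    (hmaj : ∀ k : Fin (n + 1), ∑ i ∈ Finset.Ici k, p i / a i ≥
      w * ∑ j, (q j / b j) * ∑ i ∈ Finset.Ici k, A i j)
    (f : Fin (n + 1) → ℝ)
    (hfn : f (Fin.last n) ≥
      (1 / 2) * Real.logb 2 (2 * Real.pi * Real.exp 1 / (h (Fin.last n)) ^ 2))
    (hf1 : f 0 ≤ (1 / 2) * Real.logb 2 (2 * Real.pi * Real.exp 1 * (Q + 1 / (h 0) ^ 2)))
    (hEPI : ∀ i k : Fin (n + 1), i < k →
      (2 : ℝ) ^ (2 * f i) - 2 * Real.pi * Real.exp 1 / (h i) ^ 2 ≥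
      (2 : ℝ) ^ (2 * f k) - 2 * Real.pi * Real.exp 1 / (h k) ^ 2) :
    ∑ i, p i * f i - (w / 2) * ∑ j, q j * Real.logb 2 (∑ i, A i j * (2 : ℝ) ^ (2 * f i)) ≤
      (1 / 2) * ∑ i, p i * Real.logb 2 (2 * Real.pi * Real.exp 1 * a i) -
      (w / 2) * ∑ j, q j * Real.logb 2 (2 * Real.pi * Real.exp 1 * b j) := by
  set c : ℝ := 2 * Real.pi * Real.exp 1 with hc
  have hc0 : (0 : ℝ) < c := by rw [hc]; positivity
  have ha0 : ∀ i, 0 < a i := fun i => by rw [ha i]; have := hh0 i; positivity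
  have hb0 : ∀ j, 0 < b j := fun j => by rw [hb j]; have := hg0 j; positivity
  set T : Fin (n + 1) → ℝ := fun i => (2 : ℝ) ^ (2 * f i) with hT
  have hTdef : ∀ i, (2 : ℝ) ^ (2 * f i) = T i := fun i => rfl
  have hT0 : ∀ i, 0 < T i := fun i => Real.rpow_pos_of_pos two_pos _
  simp only [hTdef]
  set u : Fin (n + 1) → ℝ := fun i => 2 * f i - Real.logb 2 (c * a i) with hu
  have hlog2 : (0 : ℝ) < Real.log 2 := Real.log_pos one_lt_two
  have hlogT : ∀ i, Real.log (T i) = 2 * f i * Real.log 2 := fun i => Real.log_rpow two_pos _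
  -- Fact J (Jensen step)
  have factJ : ∀ j, Real.logb 2 (c * b j) + ∑ i, (A i j * a i / b j) * u i ≤
      Real.logb 2 (∑ i, A i j * T i) := by
    intro j
    set lam : Fin (n + 1) → ℝ := fun i => A i j * a i / b j with hlam
    set x : Fin (n + 1) → ℝ := fun i => T i * b j / a i with hx
    have hlam0 : ∀ i, 0 ≤ lam i := fun i => by
      have := hA0 i j; have := (ha0 i).le; have := (hb0 j).le; positivity
    have hlam1 : ∑ i, lam i = 1 := by
      simp only [hlam]
      rw [← Finset.sum_div, hAa j, div_self (hb0 j).ne']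
    have hx0 : ∀ i, 0 < x i := fun i =>
      div_pos (mul_pos (hT0 i) (hb0 j)) (ha0 i)
    have hxs : ∑ i, lam i * x i = ∑ i, A i j * T i := by
      refine Finset.sum_congr rfl fun i _ => ?_
      simp only [hlam, hx]
      have hane : a i ≠ 0 := (ha0 i).ne'
      have hbne : b j ≠ 0 := (hb0 j).ne'
      field_simp
      try ring
    have hJ := aux_jensen_log lam x hlam0 hlam1 hx0
    rw [hxs] at hJ
    have hlx : ∀ i, Real.log (x i) = u i * Real.log 2 + Real.log (c * b j) := by
      intro i
      have e1 : Real.log (x i) = Real.log (T i) + Real.log (b j) - Real.log (a i) := by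
        simp only [hx]
        rw [Real.log_div (mul_pos (hT0 i) (hb0 j)).ne' (ha0 i).ne',
          Real.log_mul (hT0 i).ne' (hb0 j).ne']
      have e2 : u i * Real.log 2 = Real.log (T i) - (Real.log c + Real.log (a i)) := by
        simp only [hu]
        rw [sub_mul, Real.logb, div_mul_cancel₀ _ hlog2.ne',
          Real.log_mul hc0.ne' (ha0 i).ne', hlogT i]
      rw [e1, e2, Real.log_mul hc0.ne' (hb0 j).ne']; ring
    have hsum : ∑ i, lam i * Real.log (x i)
        = (∑ i, lam i * u i) * Real.log 2 + Real.log (c * b j) := by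
      simp only [hlx, mul_add, ← mul_assoc]
      rw [Finset.sum_add_distrib, ← Finset.sum_mul, ← Finset.sum_mul, hlam1, one_mul]
    rw [hsum] at hJ
    rw [Real.logb, Real.logb]
    have hrw : Real.log (c * b j) / Real.log 2 + ∑ i, lam i * u i
        = (Real.log (c * b j) + (∑ i, lam i * u i) * Real.log 2) / Real.log 2 := by
      field_simp
    have hlam_mul : ∀ i, (A i j * a i / b j) * u i = lam i * u i := fun i => rfl
    simp only [hlam_mul]
    rw [hrw]
    exact (div_le_div_iff_of_pos_right hlog2).mpr (by linarith)
  -- step 1: bound the objective using Fact J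
  set D : Fin (n + 1) → ℝ := fun i => p i - w * ∑ j, q j * (A i j * a i / b j) with hD
  have step1 : ∑ i, p i * f i - (w / 2) * ∑ j, q j * Real.logb 2 (∑ i, A i j * T i)
      ≤ ∑ i, p i * f i -
        (w / 2) * ∑ j, q j * (Real.logb 2 (c * b j) + ∑ i, (A i j * a i / b j) * u i) := by
    apply sub_le_sub_left
    apply mul_le_mul_of_nonneg_left _ (by linarith : (0:ℝ) ≤ w / 2)
    exact Finset.sum_le_sum fun j _ => mul_le_mul_of_nonneg_left (factJ j) (hq j).le
  -- step 2: algebraic identity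
  have step2 : ∑ i, p i * f i -
        (w / 2) * ∑ j, q j * (Real.logb 2 (c * b j) + ∑ i, (A i j * a i / b j) * u i)
      = ((1 / 2) * ∑ i, p i * Real.logb 2 (c * a i) -
          (w / 2) * ∑ j, q j * Real.logb 2 (c * b j)) + (1 / 2) * ∑ i, D i * u i := by
    have h1 : ∑ i, p i * f i
        = (1 / 2) * ∑ i, p i * Real.logb 2 (c * a i) + (1 / 2) * ∑ i, p i * u i := by
      rw [Finset.mul_sum, Finset.mul_sum, ← Finset.sum_add_distrib]
      refine Finset.sum_congr rfl fun i _ => ?_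
      simp only [hu]; ring
    have h2 : ∑ j, q j * (Real.logb 2 (c * b j) + ∑ i, (A i j * a i / b j) * u i)
        = ∑ j, q j * Real.logb 2 (c * b j)
          + ∑ i, (∑ j, q j * (A i j * a i / b j)) * u i := by
      simp only [mul_add]
      rw [Finset.sum_add_distrib]
      congr 1
      calc ∑ j, q j * ∑ i, (A i j * a i / b j) * u i
          = ∑ j, ∑ i, q j * ((A i j * a i / b j) * u i) := by simp [Finset.mul_sum]
        _ = ∑ i, ∑ j, q j * ((A i j * a i / b j) * u i) := Finset.sum_comm
        _ = ∑ i, (∑ j, q j * (A i j * a i / b j)) * u i := by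
            refine Finset.sum_congr rfl fun i _ => ?_
            rw [Finset.sum_mul]
            exact Finset.sum_congr rfl fun j _ => by ring
    have h3 : ∑ i, D i * u i
        = ∑ i, p i * u i - w * ∑ i, (∑ j, q j * (A i j * a i / b j)) * u i := by
      rw [Finset.mul_sum, ← Finset.sum_sub_distrib]
      refine Finset.sum_congr rfl fun i _ => ?_
      simp only [hD]; ring
    rw [h1, h2, h3]; ring
  -- step 3: the Abel-summation part
  have step3 : ∑ i, D i * u i ≤ 0 := by
    set E : Fin (n + 1) → ℝ := fun i => p i / a i - w * ∑ j, (q j / b j) * A i j with hE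
    set V : Fin (n + 1) → ℝ := fun i => a i * u i with hV
    have key : ∀ i, D i * u i = E i * V i := by
      intro i
      have ha' : a i ≠ 0 := (ha0 i).ne'
      have hsum : (∑ j, (q j / b j) * A i j) * a i = ∑ j, q j * (A i j * a i / b j) := by
        rw [Finset.sum_mul]
        refine Finset.sum_congr rfl fun j _ => ?_
        have hb' : b j ≠ 0 := (hb0 j).ne'
        field_simp
        try ring
      simp only [hD, hE, hV]
      have expand : (p i / a i - w * ∑ j, (q j / b j) * A i j) * (a i * u i)
          = (p i / a i * a i) * u i - w * ((∑ j, (q j / b j) * A i j) * a i) * u i := by ring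
      rw [expand, div_mul_cancel₀ _ ha', hsum]
      ring
    rw [Finset.sum_congr rfl fun i _ => key i]
    apply aux_abel_fin n E V
    · intro k
      have hrw : ∑ i ∈ Finset.Ici k, E i
          = ∑ i ∈ Finset.Ici k, p i / a i
            - w * ∑ j, (q j / b j) * ∑ i ∈ Finset.Ici k, A i j := by
        simp only [hE]
        rw [Finset.sum_sub_distrib]
        congr 1
        calc ∑ i ∈ Finset.Ici k, w * ∑ j, (q j / b j) * A i j
            = ∑ i ∈ Finset.Ici k, ∑ j, w * ((q j / b j) * A i j) := by simp [Finset.mul_sum]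
          _ = ∑ j, ∑ i ∈ Finset.Ici k, w * ((q j / b j) * A i j) := Finset.sum_comm
          _ = w * ∑ j, (q j / b j) * ∑ i ∈ Finset.Ici k, A i j := by
              rw [Finset.mul_sum]
              refine Finset.sum_congr rfl fun j _ => ?_
              rw [Finset.mul_sum, Finset.mul_sum]
              try exact Finset.sum_congr rfl fun i _ => by ring
      rw [hrw]
      have := hmaj k
      linarith
    · -- antitone
      have huU : ∀ i, u i = Real.log ((a i + (T i / c - a i)) / a i) / Real.log 2 := by
        intro i
        have harg : (a i + (T i / c - a i)) / a i = T i / (c * a i) := by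
          rw [add_sub_cancel, div_div]
        rw [harg, Real.log_div (hT0 i).ne' (mul_pos hc0 (ha0 i)).ne',
          Real.log_mul hc0.ne' (ha0 i).ne']
        simp only [hu]
        rw [Real.logb, Real.log_mul hc0.ne' (ha0 i).ne', hlogT i]
        have hl2 : Real.log 2 ≠ 0 := hlog2.ne'
        field_simp
        try ring
      intro i k hik
      rcases eq_or_lt_of_le hik with rfl | hlt
      · exact le_rfl
      have hhik : h i < h k := hhmono hlt
      have hak : a k ≤ a i := by
        rw [ha i, ha k]
        have h1 := hh0 i
        have h2 : (h i) ^ 2 ≤ (h k) ^ 2 := by nlinarith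
        have : 1 / (h k) ^ 2 ≤ 1 / (h i) ^ 2 := by
          apply one_div_le_one_div_of_le (by positivity) h2
        linarith
      have h1 : 0 < a k + (T k / c - a k) := by
        rw [add_sub_cancel]; exact div_pos (hT0 k) hc0
      have hww : T k / c - a k ≤ T i / c - a i := by
        have hepi := hEPI i k hlt
        simp only [hTdef] at hepi
        have e1 : c / (h i) ^ 2 = c * (a i - Q) := by
          rw [ha i]; have := (hh0 i).ne'; field_simp; try ring
        have e2 : c / (h k) ^ 2 = c * (a k - Q) := by
          rw [ha k]; have := (hh0 k).ne'; field_simp; try ring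
        rw [e1, e2] at hepi
        have hquot : (T k - c * (a k - Q)) / c ≤ (T i - c * (a i - Q)) / c :=
          (div_le_div_iff_of_pos_right hc0).mpr hepi
        have hcne : c ≠ 0 := hc0.ne'
        have q1 : (T k - c * (a k - Q)) / c = T k / c - a k + Q := by field_simp; try ring
        have q2 : (T i - c * (a i - Q)) / c = T i / c - a i + Q := by field_simp; try ring
        rw [q1, q2] at hquot
        linarith
      have main := aux_vmono (ha0 k) hak hww h1
      simp only [hV, huU i, huU k, ← mul_div_assoc]
      exact (div_le_div_iff_of_pos_right hlog2).mpr main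
    · -- V 0 ≤ 0
      have hu0 : u 0 ≤ 0 := by
        simp only [hu]
        rw [ha 0]
        linarith [hf1]
      exact mul_nonpos_of_nonneg_of_nonpos (ha0 0).le hu0
  calc ∑ i, p i * f i - (w / 2) * ∑ j, q j * Real.logb 2 (∑ i, A i j * T i)
      ≤ ∑ i, p i * f i -
        (w / 2) * ∑ j, q j * (Real.logb 2 (c * b j) + ∑ i, (A i j * a i / b j) * u i) := step1
    _ = ((1 / 2) * ∑ i, p i * Real.logb 2 (c * a i) -
          (w / 2) * ∑ j, q j * Real.logb 2 (c * b j)) + (1 / 2) * ∑ i, D i * u i := step2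
    _ ≤ (1 / 2) * ∑ i, p i * Real.logb 2 (c * a i) -
          (w / 2) * ∑ j, q j * Real.logb 2 (c * b j) := by linarith
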